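/- Decompose the curvature form of a connection ω on a Gaussian foliated spacetime as F_ω = e⁰ ∧ E_ω + B_ω into electric and magnetic parts, where E_ω = e₀ ⌟ F_ω. Then in an adapted frame the spatial covariant derivative of F_ω (as a section of Λ²M ⊗ Ad P) decomposes as (∇_ω F_ω)_k = e⁰ ∧ e^i ⊗ ((D_ω E_ω)_{ki} + II_k^ℓ B_{ℓi}) + e^i ∧ e^j ⊗ ½((D_ω B_ω)_{kij} − II_{kj} E_i + II_{ki} E_j), while the temporal derivative satisfies ∇_ω F_ω/dτ = e⁰ ∧ (∇_ω E_ω/dτ) + (∇_ω B_ω/dτ). -/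
import Mathlib


/-- Decompose the curvature form of a connection `ω` on a Gaussian
foliated spacetime as `F_ω = e⁰ ∧ E_ω + B_ω`, i.e. in components
`E i = F_{0 i}` and `B i j = F_{i j}`.  In an adapted frame (with frame
Christoffel symbols `Γ_{0ν}^λ = 0`, `Γ_{i0}^k = −II_i^k`, `Γ_{ij}^0 = −II_{ij}`
and spatial symbols `ΓD`), the covariant derivative of `F_ω` as a section of
`Λ²M ⊗ Ad P` decomposes as
`(∇_ω F_ω)_k = e⁰∧e^i ⊗ ((D_ωE_ω)_{ki} + II_k^ℓ B_{ℓi})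
 + e^i∧e^j ⊗ ½((D_ωB_ω)_{kij} − II_{kj}E_i + II_{ki}E_j)`,
while the temporal derivative is `∇_ωF_ω/dτ = e⁰∧(∇_ωE_ω/dτ) + ∇_ωB_ω/dτ`. -/
theorem curvature_covariant_derivative_splitting
    {C A : Type*} [CommRing C] [AddCommGroup A] [Module C A]
    (nabAd : Fin 4 → A → A)
    (Fc : Fin 4 → Fin 4 → A)
    (hFc_antisymm : ∀ μ ν, Fc μ ν = - Fc ν μ)
    (hFc_diag : ∀ μ, Fc μ μ = 0)
    (Γ : Fin 4 → Fin 4 → Fin 4 → C)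
    (II : Fin 3 → Fin 3 → C)
    (ΓD : Fin 3 → Fin 3 → Fin 3 → C)
    (hΓ0 : ∀ ν lam : Fin 4, Γ 0 ν lam = 0)
    (hΓs0s : ∀ k a : Fin 3, Γ k.succ 0 a.succ = - II k a)
    (hΓs00 : ∀ k : Fin 3, Γ k.succ 0 0 = 0)
    (hΓss0 : ∀ k i : Fin 3, Γ k.succ i.succ 0 = - II k i)
    (hΓsss : ∀ k i a : Fin 3, Γ k.succ i.succ a.succ = ΓD k i a)
    (nabF : Fin 4 → Fin 4 → Fin 4 → A)
    (hnabF : ∀ μ ν lam : Fin 4, nabF μ ν lam =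
      nabAd μ (Fc ν lam) - (∑ σ : Fin 4, Γ μ ν σ • Fc σ lam)
        - (∑ σ : Fin 4, Γ μ lam σ • Fc ν σ)) :
    (∀ i : Fin 3, nabF 0 0 i.succ = nabAd 0 (Fc 0 i.succ)) ∧
    (∀ i j : Fin 3, nabF 0 i.succ j.succ = nabAd 0 (Fc i.succ j.succ)) ∧
    (∀ k i : Fin 3, nabF k.succ 0 i.succ =
      (nabAd k.succ (Fc 0 i.succ) - ∑ a : Fin 3, ΓD k i a • Fc 0 a.succ)
        + ∑ l : Fin 3, II k l • Fc l.succ i.succ) ∧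
    (∀ k i j : Fin 3, nabF k.succ i.succ j.succ =
      (nabAd k.succ (Fc i.succ j.succ) - (∑ a : Fin 3, ΓD k i a • Fc a.succ j.succ)
        - (∑ a : Fin 3, ΓD k j a • Fc i.succ a.succ))
        - II k j • Fc 0 i.succ + II k i • Fc 0 j.succ) := by
  have e1 : (1:Fin 4) = (0:Fin 3).succ := rfl
  have e2 : (2:Fin 4) = (1:Fin 3).succ := rfl
  have e3 : (3:Fin 4) = (2:Fin 3).succ := rfl
  refine ⟨?_, ?_, ?_, ?_⟩
  · intro i
    rw [hnabF]; simp [hΓ0]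
  · intro i j
    rw [hnabF]; simp [hΓ0]
  · intro k i
    rw [hnabF]
    simp only [Fin.sum_univ_four, Fin.sum_univ_three, e1, e2, e3, hΓs00, hΓs0s,
      hΓss0, hΓsss, hFc_diag, neg_smul, smul_zero, zero_smul]
    abel
  · intro k i j
    rw [hnabF]
    simp only [Fin.sum_univ_four, Fin.sum_univ_three, e1, e2, e3, hΓss0, hΓsss,
      hFc_diag, neg_smul, smul_zero, zero_smul, hFc_antisymm i.succ 0, smul_neg]
    abel
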